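/- There are infinitely many positive integers n such that N_prod(n, 2, n−2, 1) > N̂_prod(n, 2, n−2, 1). -/

import Mathlib

open Finset

/-- The ground set `[n] = {1,…,n}`. -/
def gs (n : ℕ) : Finset ℕ := Finset.Icc 1 n

/-- `F` is an `m`-uniform family of subsets of `[n]`. -/
def UniformOn (n m : ℕ) (F : Finset (Finset ℕ)) : Prop :=
  ∀ A ∈ F, A ⊆ gs n ∧ A.card = m

/-- `F` and `G` are cross-`t`-intersecting. -/
def CrossInt (t : ℕ) (F G : Finset (Finset ℕ)) : Prop :=
  ∀ A ∈ F, ∀ B ∈ G, t ≤ (A ∩ B).card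

/-- The maximum of `|F| ⬝ |G|` over cross-`t`-intersecting pairs where `F` is an
`a`-uniform family and `G` a `b`-uniform family of subsets of `[n]`. -/
noncomputable def NProd (n a b t : ℕ) : ℕ :=
  sSup {x : ℕ | ∃ F G : Finset (Finset ℕ),
    UniformOn n a F ∧ UniformOn n b G ∧ CrossInt t F G ∧ x = F.card * G.card}

/-- The family `{A ∈ C([n],m) : |A ∩ [s]| ≥ u}` appearing in a Hirschorn pair. -/
def HirschF (n m s u : ℕ) : Finset (Finset ℕ) :=
  ((gs n).powersetCard m).filter (fun A => u ≤ (A ∩ gs s).card)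

/-- The maximum of `|F| ⬝ |G|` over all Hirschorn pairs `(F, G)` with parameters
`u, v, s ∈ [n]`, `u + v = s + t`. -/
noncomputable def NHatProd (n a b t : ℕ) : ℕ :=
  sSup {x : ℕ | ∃ u ∈ gs n, ∃ v ∈ gs n, ∃ s ∈ gs n, u + v = s + t ∧
    x = (HirschF n a s u).card * (HirschF n b s v).card}

lemma gs_card (n : ℕ) : (gs n).card = n := by simp [gs]

lemma gs_mono {s n : ℕ} (h : s ≤ n) : gs s ⊆ gs n := Finset.Icc_subset_Icc_right h

/-- complement map is injective on subsets of `gs n` -/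
lemma compl_injOn (n : ℕ) {S : Finset (Finset ℕ)} (hS : ∀ B ∈ S, B ⊆ gs n) :
    Set.InjOn (fun B => gs n \ B) S := by
  intro B1 h1 B2 h2 h
  have e1 : gs n \ (gs n \ B1) = B1 := Finset.sdiff_sdiff_eq_self (hS B1 h1)
  have e2 : gs n \ (gs n \ B2) = B2 := Finset.sdiff_sdiff_eq_self (hS B2 h2)
  simp only at h
  rw [← e1, ← e2, h]

/-- Lower bound: `T * T ≤ NProd n 2 (n-2) 1` when `choose n 2 = 2T`. -/
lemma low (n T : ℕ) (hn : 4 ≤ n) (hT : n.choose 2 = 2 * T) :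
    T * T ≤ NProd n 2 (n - 2) 1 := by
  classical
  set P : Finset (Finset ℕ) := (gs n).powersetCard 2 with hP
  have hPcard : P.card = 2 * T := by
    rw [hP, Finset.card_powersetCard, gs_card, hT]
  obtain ⟨F, hFP, hFcard⟩ : ∃ F ⊆ P, F.card = T :=
    Finset.exists_subset_card_eq (by omega)
  set G : Finset (Finset ℕ) := (P \ F).image (fun B => gs n \ B) with hG
  have hmemP : ∀ A ∈ P, A ⊆ gs n ∧ A.card = 2 := by
    intro A hA
    rw [hP, Finset.mem_powersetCard] at hA
    exact hA
  -- G properties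
  have hGmem : ∀ C ∈ G, ∃ B ∈ P \ F, C = gs n \ B := by
    intro C hC
    rw [hG, Finset.mem_image] at hC
    obtain ⟨B, hB, rfl⟩ := hC
    exact ⟨B, hB, rfl⟩
  have hUF : UniformOn n 2 F := fun A hA => hmemP A (hFP hA)
  have hUG : UniformOn n (n - 2) G := by
    intro C hC
    obtain ⟨B, hB, rfl⟩ := hGmem C hC
    have hB' := hmemP B (Finset.mem_sdiff.1 hB).1
    constructor
    · exact Finset.sdiff_subset
    · rw [Finset.card_sdiff_of_subset hB'.1, gs_card, hB'.2]
  have hCI : CrossInt 1 F G := by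
    intro A hA C hC
    obtain ⟨B, hB, rfl⟩ := hGmem C hC
    rw [Finset.mem_sdiff] at hB
    have hA' := hmemP A (hFP hA)
    have hB' := hmemP B hB.1
    by_contra hcon
    push_neg at hcon
    interval_cases h : (A ∩ (gs n \ B)).card
    have hempty : A ∩ (gs n \ B) = ∅ := Finset.card_eq_zero.1 h
    have hAB : A ⊆ B := by
      intro x hx
      by_contra hxB
      have : x ∈ A ∩ (gs n \ B) :=
        Finset.mem_inter.2 ⟨hx, Finset.mem_sdiff.2 ⟨hA'.1 hx, hxB⟩⟩
      rw [hempty] at this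
      exact absurd this (Finset.notMem_empty x)
    have : A = B := Finset.eq_of_subset_of_card_le hAB (by omega)
    exact hB.2 (this ▸ hA)
  have hGcard : G.card = T := by
    rw [hG, Finset.card_image_of_injOn
      (compl_injOn n (fun B hB => (hmemP B (Finset.mem_sdiff.1 hB).1).1)),
      Finset.card_sdiff_of_subset hFP, hPcard, hFcard]
    omega
  -- membership and sSup
  have hmem : T * T ∈ {x : ℕ | ∃ F G : Finset (Finset ℕ),
      UniformOn n 2 F ∧ UniformOn n (n - 2) G ∧ CrossInt 1 F G ∧ x = F.card * G.card} :=
    ⟨F, G, hUF, hUG, hCI, by rw [hFcard, hGcard]⟩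
  have hbdd : BddAbove {x : ℕ | ∃ F G : Finset (Finset ℕ),
      UniformOn n 2 F ∧ UniformOn n (n - 2) G ∧ CrossInt 1 F G ∧ x = F.card * G.card} := by
    refine ⟨2 ^ n * 2 ^ n, ?_⟩
    rintro x ⟨F', G', hF', hG', -, rfl⟩
    have h1 : F' ⊆ (gs n).powerset := fun A hA => Finset.mem_powerset.2 (hF' A hA).1
    have h2 : G' ⊆ (gs n).powerset := fun A hA => Finset.mem_powerset.2 (hG' A hA).1
    have c1 : F'.card ≤ 2 ^ n := by
      calc F'.card ≤ ((gs n).powerset).card := Finset.card_le_card h1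
        _ = 2 ^ n := by rw [Finset.card_powerset, gs_card]
    have c2 : G'.card ≤ 2 ^ n := by
      calc G'.card ≤ ((gs n).powerset).card := Finset.card_le_card h2
        _ = 2 ^ n := by rw [Finset.card_powerset, gs_card]
    exact Nat.mul_le_mul c1 c2
  exact le_csSup hbdd hmem

/-- The quadratic bound: if `f + g ≤ 2T`, `f ≠ T`, then `f * g ≤ T * T - 1`. -/
lemma quad (f g T : ℕ) (hT : 1 ≤ T) (hsum : f + g ≤ 2 * T) (hne : f ≠ T) :
    f * g ≤ T * T - 1 := by
  have h1 : (1 : ℤ) ≤ ((T : ℤ) - f) ^ 2 := by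
    have h0 : (T : ℤ) - f ≠ 0 := by
      intro h
      apply hne
      omega
    rcases h0.lt_or_gt with h | h <;> nlinarith
  have h2 : (f : ℤ) * g ≤ (T : ℤ) * T - 1 := by nlinarith [Int.ofNat_le.2 hsum]
  have h3 : 1 ≤ T * T := Nat.one_le_iff_ne_zero.2 (by positivity)
  omega

/-- Cross-intersecting property of Hirschorn pairs. -/
lemma hirsch_cross (n s u v : ℕ) (hs : s ≤ n) (huv : u + v = s + 1) :
    ∀ A ∈ HirschF n 2 s u, ∀ B ∈ HirschF n (n - 2) s v, 1 ≤ (A ∩ B).card := by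
  intro A hA B hB
  rw [HirschF, Finset.mem_filter] at hA hB
  have hu : u ≤ (A ∩ gs s).card := hA.2
  have hv : v ≤ (B ∩ gs s).card := hB.2
  have hun : ((A ∩ gs s) ∪ (B ∩ gs s)).card ≤ s := by
    calc ((A ∩ gs s) ∪ (B ∩ gs s)).card ≤ (gs s).card :=
          Finset.card_le_card (Finset.union_subset Finset.inter_subset_right
            Finset.inter_subset_right)
      _ = s := gs_card s
  have hkey := Finset.card_union_add_card_inter (A ∩ gs s) (B ∩ gs s)
  have hsub : (A ∩ gs s) ∩ (B ∩ gs s) ⊆ A ∩ B := by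
    intro x hx
    simp only [Finset.mem_inter] at hx ⊢
    exact ⟨hx.1.1, hx.2.1⟩
  have := Finset.card_le_card hsub
  omega

/-- Cardinality of the small side of a Hirschorn pair. -/
lemma hirschF_card (n s u : ℕ) (hs : s ≤ n) (hu : 1 ≤ u) :
    (HirschF n 2 s u).card = 0 ∨ (HirschF n 2 s u).card = s.choose 2 ∨
    (HirschF n 2 s u).card = n.choose 2 - (n - s).choose 2 := by
  classical
  rcases Nat.lt_or_ge u 3 with h3 | h3
  · interval_cases u
    · -- u = 1
      right; right
      have hneg : ((gs n).powersetCard 2).filter (fun A => ¬ 1 ≤ (A ∩ gs s).card)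
          = (gs n \ gs s).powersetCard 2 := by
        ext A
        simp only [Finset.mem_filter, Finset.mem_powersetCard, not_le, Nat.lt_one_iff,
          Finset.card_eq_zero, Finset.subset_sdiff]
        constructor
        · rintro ⟨⟨h1, h2⟩, h4⟩
          exact ⟨⟨h1, Finset.disjoint_right.2 (fun x hx hxA =>
            (Finset.notMem_empty x) (h4 ▸ Finset.mem_inter.2 ⟨hxA, hx⟩))⟩, h2⟩
        · rintro ⟨⟨h1, h2⟩, h4⟩
          refine ⟨⟨h1, h4⟩, ?_⟩
          rw [← Finset.disjoint_iff_inter_eq_empty]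
          exact h2
      have htot := Finset.card_filter_add_card_filter_not
        (s := (gs n).powersetCard 2) (p := fun A => 1 ≤ (A ∩ gs s).card)
      rw [hneg] at htot
      have h5 : ((gs n).powersetCard 2).card = n.choose 2 := by
        rw [Finset.card_powersetCard, gs_card]
      have h6 : ((gs n \ gs s).powersetCard 2).card = (n - s).choose 2 := by
        rw [Finset.card_powersetCard, Finset.card_sdiff_of_subset (gs_mono hs), gs_card, gs_card]
      rw [HirschF]
      omega
    · -- u = 2
      right; left
      have : HirschF n 2 s 2 = (gs s).powersetCard 2 := by
        ext A
        rw [HirschF, Finset.mem_filter, Finset.mem_powersetCard, Finset.mem_powersetCard]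
        constructor
        · rintro ⟨⟨h1, h2⟩, h4⟩
          have hsub : A ∩ gs s ⊆ A := Finset.inter_subset_left
          have : A ∩ gs s = A := Finset.eq_of_subset_of_card_le hsub (by omega)
          refine ⟨?_, h2⟩
          rw [← this]
          exact Finset.inter_subset_right
        · rintro ⟨h1, h2⟩
          have : A ∩ gs s = A := Finset.inter_eq_left.2 h1
          exact ⟨⟨h1.trans (gs_mono hs), h2⟩, by rw [this, h2]⟩
      rw [this, Finset.card_powersetCard, gs_card]
  · -- u ≥ 3 : empty
    left
    rw [Finset.card_eq_zero, HirschF, Finset.filter_eq_empty_iff]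
    intro A hA
    rw [Finset.mem_powersetCard] at hA
    have : (A ∩ gs s).card ≤ A.card := Finset.card_le_card Finset.inter_subset_left
    omega

/-- Upper bound on NHatProd. -/
lemma up (n T : ℕ) (hn : 4 ≤ n) (hT : n.choose 2 = 2 * T) (hT3 : 3 ≤ T)
    (htri : ∀ j : ℕ, j.choose 2 ≠ T) :
    NHatProd n 2 (n - 2) 1 ≤ T * T - 1 := by
  classical
  rw [NHatProd]
  apply csSup_le'
  rintro x ⟨u, hu, v, hv, s, hs, huv, rfl⟩
  rw [gs, Finset.mem_Icc] at hu hv hs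
  set F := HirschF n 2 s u with hF
  set G := HirschF n (n - 2) s v with hGdef
  -- members of F and G
  have hFmem : ∀ A ∈ F, A ⊆ gs n ∧ A.card = 2 := by
    intro A hA
    rw [hF, HirschF, Finset.mem_filter, Finset.mem_powersetCard] at hA
    exact hA.1
  have hGmem : ∀ B ∈ G, B ⊆ gs n ∧ B.card = n - 2 := by
    intro B hB
    rw [hGdef, HirschF, Finset.mem_filter, Finset.mem_powersetCard] at hB
    exact hB.1
  -- the complement image of G
  set GC : Finset (Finset ℕ) := G.image (fun B => gs n \ B) with hGC
  have hGCcard : GC.card = G.card :=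
    Finset.card_image_of_injOn (compl_injOn n (fun B hB => (hGmem B hB).1))
  have hcross := hirsch_cross n s u v hs.2 huv
  have hdisj : Disjoint F GC := by
    rw [Finset.disjoint_left]
    intro A hA hAGC
    rw [hGC, Finset.mem_image] at hAGC
    obtain ⟨B, hB, hAB⟩ := hAGC
    have h1 := hcross A hA B hB
    have : A ∩ B = ∅ := by
      rw [← hAB]
      exact Finset.disjoint_iff_inter_eq_empty.1 Finset.sdiff_disjoint
    rw [this] at h1
    simp at h1
  have hsubP : F ∪ GC ⊆ (gs n).powersetCard 2 := by
    apply Finset.union_subset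
    · intro A hA
      rw [Finset.mem_powersetCard]
      exact hFmem A hA
    · intro C hC
      rw [hGC, Finset.mem_image] at hC
      obtain ⟨B, hB, rfl⟩ := hC
      rw [Finset.mem_powersetCard]
      have := hGmem B hB
      refine ⟨Finset.sdiff_subset, ?_⟩
      rw [Finset.card_sdiff_of_subset this.1, gs_card, this.2]
      omega
  have hsum : F.card + G.card ≤ 2 * T := by
    have h1 : (F ∪ GC).card = F.card + GC.card := Finset.card_union_of_disjoint hdisj
    have h2 : (F ∪ GC).card ≤ ((gs n).powersetCard 2).card := Finset.card_le_card hsubP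
    have h3 : ((gs n).powersetCard 2).card = 2 * T := by
      rw [Finset.card_powersetCard, gs_card, hT]
    omega
  -- F.card ≠ T
  have hFne : F.card ≠ T := by
    have hFc : F.card = (HirschF n 2 s u).card := rfl
    rcases hirschF_card n s u hs.2 hu.1 with h | h | h
    · omega
    · rw [hFc, h]
      exact htri s
    · rw [hFc, h]
      intro hcon
      have hle : (n - s).choose 2 ≤ n.choose 2 := Nat.choose_le_choose 2 (by omega)
      have : (n - s).choose 2 = T := by omega
      exact htri (n - s) this
  exact quad F.card G.card T (by omega) hsum hFne

/-- No triangular number is ≡ the relevant residue. -/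
lemma tri_mod (k : ℕ) : (k + 1) * k % 9 ≠ 1 := by
  have hr : k % 9 < 9 := Nat.mod_lt _ (by norm_num)
  obtain ⟨q, hq⟩ : ∃ q, k = 9 * q + k % 9 := ⟨k / 9, by omega⟩
  set r := k % 9 with hrdef
  rw [hq]
  have : (9 * q + r + 1) * (9 * q + r) = 9 * (9 * q * q + 2 * q * r + q) + (r + 1) * r := by
    ring
  rw [this, Nat.mul_add_mod]
  interval_cases r <;> decide

lemma not_triangular (m : ℕ) : ∀ j : ℕ, j.choose 2 ≠ 9 * m + 5 := by
  intro j hj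
  rcases j with _ | k
  · simp [Nat.choose] at hj
  · rw [Nat.choose_two_right] at hj
    have heven : 2 ∣ (k + 1) * ((k + 1) - 1) := by
      rcases Nat.even_or_odd k with h | h
      · exact Dvd.dvd.mul_left h.two_dvd _
      · simp only [Nat.add_sub_cancel]
        exact Dvd.dvd.mul_right (Nat.even_add_one.2 (Nat.not_even_iff_odd.2 h)).two_dvd _
    have hval : (k + 1) * k = 2 * (9 * m + 5) := by
      simp only [Nat.add_sub_cancel] at hj heven
      omega
    have : (k + 1) * k % 9 = 1 := by
      rw [hval]
      omega
    exact tri_mod k this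

/-- Main inequality for suitable n. -/
lemma main_ineq (n m : ℕ) (hn : 4 ≤ n) (hnm : n * (n - 1) = 36 * m + 20) :
    NHatProd n 2 (n - 2) 1 < NProd n 2 (n - 2) 1 := by
  have hchoose : n.choose 2 = n * (n - 1) / 2 := Nat.choose_two_right n
  set T := 9 * m + 5 with hTdef
  have hT : n.choose 2 = 2 * T := by
    rw [hchoose, hnm]
    omega
  have h1 := low n T hn hT
  have h2 := up n T hn hT (by omega) (not_triangular m)
  have hT1 : 1 ≤ T * T := Nat.one_le_iff_ne_zero.2 (by positivity)
  omega

/-- Proposition: infinitely many counterexamples. -/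
theorem infinitely_many_counterexamples :
    {n : ℕ | 0 < n ∧ NHatProd n 2 (n - 2) 1 < NProd n 2 (n - 2) 1}.Infinite := by
  apply Set.infinite_of_injective_forall_mem (f := fun k : ℕ => 36 * k + 41)
  case hi =>
    intro a b h
    simp only at h
    omega
  case hf =>
    intro k
    refine ⟨by omega, ?_⟩
    apply main_ineq (m := 36 * k * k + 81 * k + 45)
    · omega
    · show (36 * k + 41) * (36 * k + 41 - 1) = 36 * (36 * k * k + 81 * k + 45) + 20
      have h41 : 36 * k + 41 - 1 = 36 * k + 40 := by omega
      rw [h41]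
      ring
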